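/- (Ciarlet–Nečas) Let Ω ⊂ ℝⁿ be a bounded open set and let u : Ω → ℝⁿ be continuously differentiable with bounded image, with det ∇u(x) > 0 for every x ∈ Ω, and satisfying the Ciarlet–Nečas condition ∫_Ω det ∇u(x) dx ≤ |u(Ω)|, where |u(Ω)| is the n-dimensional Lebesgue measure of the image u(Ω). Then u is injective on Ω. -/

import Mathlib

open MeasureTheory Filter Topology Metric Bornology
open scoped ENNReal NNReal

noncomputable section

/-- The gradient of a map `u : ℝⁿ → ℝⁿ`, identified with an `n × n` matrix. -/
def grad {n : ℕ} (u : EuclideanSpace ℝ (Fin n) → EuclideanSpace ℝ (Fin n))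
    (x : EuclideanSpace ℝ (Fin n)) : Matrix (Fin n) (Fin n) ℝ :=
  Matrix.of fun i j => fderiv ℝ u x (EuclideanSpace.single j 1) i

lemma grad_det_eq {n : ℕ} (u : EuclideanSpace ℝ (Fin n) → EuclideanSpace ℝ (Fin n))
    (x : EuclideanSpace ℝ (Fin n)) : (grad u x).det = (fderiv ℝ u x).det := by
  have hb : grad u x = LinearMap.toMatrix (EuclideanSpace.basisFun (Fin n) ℝ).toBasis
      (EuclideanSpace.basisFun (Fin n) ℝ).toBasis
      (fderiv ℝ u x : EuclideanSpace ℝ (Fin n) →ₗ[ℝ] EuclideanSpace ℝ (Fin n)) := by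
    ext i j
    simp [grad, LinearMap.toMatrix_apply, EuclideanSpace.basisFun_apply,
      EuclideanSpace.basisFun_repr]
  rw [hb, LinearMap.det_toMatrix]

/-- Ciarlet–Nečas: a `C¹` map `u` on a bounded open set `Ω ⊆ ℝⁿ` with bounded image,
everywhere positive Jacobian determinant and satisfying the Ciarlet–Nečas condition
`∫_Ω det ∇u ≤ |u(Ω)|` is injective on `Ω`. (The integral of the nonnegative Jacobian is
taken as a lower Lebesgue integral.) -/
theorem stmt12 {n : ℕ} (Ω : Set (EuclideanSpace ℝ (Fin n)))
    (hΩo : IsOpen Ω) (hΩb : Bornology.IsBounded Ω)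
    (u : EuclideanSpace ℝ (Fin n) → EuclideanSpace ℝ (Fin n))
    (hu : ContDiffOn ℝ 1 u Ω)
    (him : Bornology.IsBounded (u '' Ω))
    (hdet : ∀ x ∈ Ω, 0 < (grad u x).det)
    (hCN : (∫⁻ x in Ω, ENNReal.ofReal ((grad u x).det)) ≤ volume (u '' Ω)) :
    Set.InjOn u Ω := by
  intro a ha b hb hab
  by_contra hne
  have key : ∀ x ∈ Ω, HasStrictFDerivAt u (fderiv ℝ u x) x := fun x hx =>
    (hu.contDiffAt (hΩo.mem_nhds hx)).hasStrictFDerivAt one_ne_zero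
  have hdet' : ∀ x ∈ Ω, (fderiv ℝ u x).det ≠ 0 := fun x hx => by
    rw [← grad_det_eq]; exact (hdet x hx).ne'
  -- local homeomorphisms at a and b
  have hFa : HasStrictFDerivAt u
      (((fderiv ℝ u a).toContinuousLinearEquivOfDetNeZero (hdet' a ha)) :
        EuclideanSpace ℝ (Fin n) →L[ℝ] EuclideanSpace ℝ (Fin n)) a := by
    rw [ContinuousLinearMap.coe_toContinuousLinearEquivOfDetNeZero]; exact key a ha
  have hFb : HasStrictFDerivAt u
      (((fderiv ℝ u b).toContinuousLinearEquivOfDetNeZero (hdet' b hb)) :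
        EuclideanSpace ℝ (Fin n) →L[ℝ] EuclideanSpace ℝ (Fin n)) b := by
    rw [ContinuousLinearMap.coe_toContinuousLinearEquivOfDetNeZero]; exact key b hb
  set ea := hFa.toOpenPartialHomeomorph u with hea
  set eb := hFb.toOpenPartialHomeomorph u with heb
  have hea_coe : ⇑ea = u := hFa.toOpenPartialHomeomorph_coe
  have heb_coe : ⇑eb = u := hFb.toOpenPartialHomeomorph_coe
  have haso : IsOpen (Ω ∩ ea.source) := hΩo.inter ea.open_source
  have hbso : IsOpen (Ω ∩ eb.source) := hΩo.inter eb.open_source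
  have hamem : a ∈ Ω ∩ ea.source := ⟨ha, hFa.mem_toOpenPartialHomeomorph_source⟩
  have hbmem : b ∈ Ω ∩ eb.source := ⟨hb, hFb.mem_toOpenPartialHomeomorph_source⟩
  obtain ⟨ra, hra, hraS⟩ := Metric.isOpen_iff.1 haso a hamem
  obtain ⟨rb, hrb, hrbS⟩ := Metric.isOpen_iff.1 hbso b hbmem
  set r : ℝ := min (min ra rb) (dist a b / 2) with hr
  have hrpos : 0 < r := by
    have : 0 < dist a b := dist_pos.2 hne
    positivity
  set s : Set (EuclideanSpace ℝ (Fin n)) := ball a r with hs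
  set t : Set (EuclideanSpace ℝ (Fin n)) := ball b r with ht
  have hst : Disjoint s t := ball_disjoint_ball (by
    have h1 : r ≤ dist a b / 2 := min_le_right _ _
    linarith)
  have hsΩ : s ⊆ Ω ∩ ea.source :=
    (ball_subset_ball (le_trans (min_le_left _ _) (min_le_left _ _))).trans hraS
  have htΩ : t ⊆ Ω ∩ eb.source :=
    (ball_subset_ball (le_trans (min_le_left _ _) (min_le_right _ _))).trans hrbS
  -- images are open
  have hso : IsOpen (u '' s) := by
    rw [← hea_coe]
    exact ea.isOpen_image_of_subset_source isOpen_ball (hsΩ.trans Set.inter_subset_right)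
  have hto : IsOpen (u '' t) := by
    rw [← heb_coe]
    exact eb.isOpen_image_of_subset_source isOpen_ball (htΩ.trans Set.inter_subset_right)
  -- u a is in both images
  have hya : u a ∈ u '' s := ⟨a, mem_ball_self hrpos, rfl⟩
  have hyb : u a ∈ u '' t := ⟨b, mem_ball_self hrpos, hab.symm⟩
  have hεpos : 0 < volume (u '' s ∩ u '' t) :=
    (hso.inter hto).measure_pos volume ⟨u a, hya, hyb⟩
  -- injectivity on s
  have hinj : Set.InjOn u s := by
    rw [← hea_coe]
    exact ea.injOn.mono (hsΩ.trans Set.inter_subset_right)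
  -- integrand congruence
  have hcong : ∀ S ⊆ Ω, ∀ x ∈ S,
      ENNReal.ofReal ((grad u x).det) = ENNReal.ofReal |(fderiv ℝ u x).det| := by
    intro S hS x hx
    rw [grad_det_eq, abs_of_pos]
    rw [← grad_det_eq]; exact hdet x (hS hx)
  have hderivWithin : ∀ (S : Set (EuclideanSpace ℝ (Fin n))), S ⊆ Ω → ∀ x ∈ S,
      HasFDerivWithinAt u (fderiv ℝ u x) S x := fun S hS x hx =>
    ((key x (hS hx)).hasFDerivAt).hasFDerivWithinAt
  have hsΩ' : s ⊆ Ω := hsΩ.trans Set.inter_subset_left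
  have htΩ' : t ⊆ Ω := htΩ.trans Set.inter_subset_left
  have hsm : MeasurableSet s := measurableSet_ball
  -- equality on s, inequality on Ω \ s
  have heq : (∫⁻ x in s, ENNReal.ofReal ((grad u x).det)) = volume (u '' s) := by
    rw [setLIntegral_congr_fun hsm (hcong s hsΩ')]
    exact lintegral_abs_det_fderiv_eq_addHaar_image volume hsm (hderivWithin s hsΩ') hinj
  have hdm : MeasurableSet (Ω \ s) := hΩo.measurableSet.diff hsm
  have hle : volume (u '' (Ω \ s)) ≤ ∫⁻ x in Ω \ s, ENNReal.ofReal ((grad u x).det) := by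
    rw [setLIntegral_congr_fun hdm
      (hcong (Ω \ s) Set.diff_subset)]
    exact addHaar_image_le_lintegral_abs_det_fderiv volume hdm
      (hderivWithin (Ω \ s) Set.diff_subset)
  -- splitting the integral
  have hsplit : (∫⁻ x in Ω, ENNReal.ofReal ((grad u x).det))
      = (∫⁻ x in Ω \ s, ENNReal.ofReal ((grad u x).det))
        + ∫⁻ x in s, ENNReal.ofReal ((grad u x).det) := by
    rw [← lintegral_union hsm Set.disjoint_sdiff_left, Set.diff_union_of_subset hsΩ']
  -- union/inter inequality
  have hkey : volume (u '' Ω) + volume (u '' s ∩ u '' t)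
      ≤ volume (u '' (Ω \ s)) + volume (u '' s) := by
    rw [← measure_union_add_inter (u '' (Ω \ s)) hso.measurableSet]
    refine add_le_add (measure_mono ?_) (measure_mono ?_)
    · rw [← Set.image_union, Set.diff_union_of_subset hsΩ']
    · have hts : t ⊆ Ω \ s := fun x hx => ⟨htΩ' hx, fun hxs => hst.le_bot ⟨hxs, hx⟩⟩
      rintro y ⟨hy1, hy2⟩
      exact ⟨Set.image_mono hts hy2, hy1⟩
  have hfin : volume (u '' Ω) ≠ ⊤ := him.measure_lt_top.ne
  have : volume (u '' Ω) + volume (u '' s ∩ u '' t) ≤ volume (u '' Ω) := by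
    calc volume (u '' Ω) + volume (u '' s ∩ u '' t)
        ≤ volume (u '' (Ω \ s)) + volume (u '' s) := hkey
      _ ≤ (∫⁻ x in Ω \ s, ENNReal.ofReal ((grad u x).det))
          + ∫⁻ x in s, ENNReal.ofReal ((grad u x).det) := by rw [heq]; gcongr
      _ = ∫⁻ x in Ω, ENNReal.ofReal ((grad u x).det) := hsplit.symm
      _ ≤ volume (u '' Ω) := hCN
  exact absurd this (ENNReal.lt_add_right hfin hεpos.ne').not_ge
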